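/- Let (X,T) be a topological dynamical system and π : X → Z a continuous surjection onto a compact metric space Z with π∘T = π. Then the set Ω = {z ∈ Z : π⁻¹(z) is a minimal set for T} is a Gδ subset of Z. -/

import Mathlib

open Filter Topology Set

/-- A map between topological spaces is *semiopen* if the image of every
nonempty open set has nonempty interior. -/
def SemiOpen {X Y : Type*} [TopologicalSpace X] [TopologicalSpace Y] (f : X → Y) : Prop :=
  ∀ U : Set X, IsOpen U → U.Nonempty → (interior (f '' U)).Nonempty

/-- The `n`-th iterate (`n : ℤ`) of a homeomorphism. -/
def zIter {X : Type*} [TopologicalSpace X] (T : X ≃ₜ X) (n : ℤ) : X → X :=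
  fun x => (T.toEquiv ^ n) x

/-- The two-sided orbit of a point under a homeomorphism. -/
def zOrbit {X : Type*} [TopologicalSpace X] (T : X ≃ₜ X) (x : X) : Set X :=
  Set.range fun n : ℤ => zIter T n x

/-- A system is minimal if every orbit is dense. -/
def IsMinimalSystem {X : Type*} [TopologicalSpace X] (T : X ≃ₜ X) : Prop :=
  ∀ x : X, Dense (zOrbit T x)

/-- A minimal subset: nonempty, closed, invariant, with no proper nonempty
closed invariant subset. -/
def IsMinimalSubset {X : Type*} [TopologicalSpace X] (T : X ≃ₜ X) (M : Set X) : Prop :=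
  M.Nonempty ∧ IsClosed M ∧ T '' M = M ∧
    ∀ M' ⊆ M, M'.Nonempty → IsClosed M' → T '' M' = M' → M' = M

/-- A factor map between systems. -/
def IsFactorMap {X Y : Type*} [TopologicalSpace X] [TopologicalSpace Y]
    (T : X ≃ₜ X) (S : Y ≃ₜ Y) (f : X → Y) : Prop :=
  Continuous f ∧ Function.Surjective f ∧ ∀ x, f (T x) = S (f x)

/-- The regionally proximal relation. -/
def RP {X : Type*} [MetricSpace X] (T : X ≃ₜ X) : Set (X × X) :=
  {p | ∃ (u v : ℕ → X) (n : ℕ → ℤ),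
    Tendsto u atTop (𝓝 p.1) ∧ Tendsto v atTop (𝓝 p.2) ∧
    Tendsto (fun i => dist (zIter T (n i) (u i)) (zIter T (n i) (v i))) atTop (𝓝 0)}

/-- A joining of two systems: a closed invariant subset of the product with
full projections onto both coordinates. -/
def IsJoining {X Y : Type*} [TopologicalSpace X] [TopologicalSpace Y]
    (T : X ≃ₜ X) (S : Y ≃ₜ Y) (J : Set (X × Y)) : Prop :=
  IsClosed J ∧ (T.prodCongr S) '' J = J ∧
    Prod.fst '' J = Set.univ ∧ Prod.snd '' J = Set.univ

/-- `J` projects onto `X_eq × Y_eq`: phrased via the regionally proximal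
relation, every product of RP-cells meets `J`. -/
def FullEqProjection {X Y : Type*} [MetricSpace X] [MetricSpace Y]
    (T : X ≃ₜ X) (S : Y ≃ₜ Y) (J : Set (X × Y)) : Prop :=
  ∀ x : X, ∀ y : Y, ∃ p ∈ J, (x, p.1) ∈ RP T ∧ (y, p.2) ∈ RP S

/-- Two minimal systems are quasi-disjoint if the full product is the only
joining projecting onto the product of the maximal equicontinuous factors. -/
def QuasiDisjoint {X Y : Type*} [MetricSpace X] [MetricSpace Y]
    (T : X ≃ₜ X) (S : Y ≃ₜ Y) : Prop :=
  ∀ J : Set (X × Y), IsJoining T S J → FullEqProjection T S J → J = Set.univ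

/-- Two systems are disjoint if the full product is the only joining. -/
def DisjointSystems {X Y : Type*} [TopologicalSpace X] [TopologicalSpace Y]
    (T : X ≃ₜ X) (S : Y ≃ₜ Y) : Prop :=
  ∀ J : Set (X × Y), IsJoining T S J → J = Set.univ

/-- A system is equicontinuous (with respect to all integer iterates). -/
def EquicontinuousSystem {X : Type*} [MetricSpace X] (T : X ≃ₜ X) : Prop :=
  ∀ ε > (0 : ℝ), ∃ δ > (0 : ℝ), ∀ x₁ x₂ : X, dist x₁ x₂ < δ →
    ∀ n : ℤ, dist (zIter T n x₁) (zIter T n x₂) < ε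

/-- A pair of points is proximal. -/
def ProximalPair {X : Type*} [MetricSpace X] (T : X ≃ₜ X) (x₁ x₂ : X) : Prop :=
  ∀ ε > (0 : ℝ), ∃ n : ℤ, dist (zIter T n x₁) (zIter T n x₂) < ε

section Aux

variable {X : Type*} [TopologicalSpace X] (T : X ≃ₜ X)

lemma zIter_zero (x : X) : zIter T 0 x = x := by simp [zIter]

lemma zIter_add_one (n : ℤ) (x : X) : zIter T (n + 1) x = T (zIter T n x) := by
  simp only [zIter]
  rw [add_comm, zpow_add, zpow_one, Equiv.Perm.mul_apply]
  rfl

lemma zIter_add_one' (n : ℤ) (x : X) : zIter T (n + 1) x = zIter T n (T x) := by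
  simp only [zIter]
  rw [zpow_add, zpow_one, Equiv.Perm.mul_apply]
  rfl

lemma zIter_sub_one (n : ℤ) (x : X) : zIter T (n - 1) x = T.symm (zIter T n x) := by
  simp only [zIter]
  rw [sub_eq_add_neg, add_comm, zpow_add, zpow_neg, zpow_one, Equiv.Perm.mul_apply]
  rfl

lemma zIter_sub_one' (n : ℤ) (x : X) : zIter T (n - 1) x = zIter T n (T.symm x) := by
  simp only [zIter]
  rw [sub_eq_add_neg, zpow_add, zpow_neg, zpow_one, Equiv.Perm.mul_apply]
  rfl

lemma zIter_continuous (n : ℤ) : Continuous (zIter T n) := by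
  induction n using Int.induction_on with
  | zero => simpa [funext (zIter_zero T)] using continuous_id'
  | succ n ih =>
      have : zIter T (n + 1) = fun x => zIter T n (T x) := funext (zIter_add_one' T n)
      rw [this]; exact ih.comp T.continuous
  | pred n ih =>
      have : zIter T (-n - 1) = fun x => zIter T (-n) (T.symm x) :=
        funext (zIter_sub_one' T (-n))
      rw [this]; exact ih.comp T.symm.continuous

lemma zIter_pi {Z : Type*} (π : X → Z) (hfix : ∀ x, π (T x) = π x) (n : ℤ) (x : X) :
    π (zIter T n x) = π x := by
  induction n using Int.induction_on with
  | zero => rw [zIter_zero]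
  | succ n ih => rw [zIter_add_one, hfix, ih]
  | pred n ih =>
      rw [zIter_sub_one, ← hfix (T.symm (zIter T (-n : ℤ) x)), T.apply_symm_apply, ih]

lemma zIter_mem_of_invariant {M : Set X} (hM : T '' M = M) {x : X} (hx : x ∈ M)
    (n : ℤ) : zIter T n x ∈ M := by
  induction n using Int.induction_on with
  | zero => rwa [zIter_zero]
  | succ n ih => rw [zIter_add_one]; rw [← hM]; exact ⟨_, ih, rfl⟩
  | pred n ih =>
      rw [zIter_sub_one]
      have : zIter T (-n : ℤ) x ∈ T '' M := by rwa [hM]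
      obtain ⟨w, hw, hw'⟩ := this
      rwa [← hw', T.symm_apply_apply]

end Aux

/-- if π : X → Z is a continuous surjection with π ∘ T = π, then
the set of z whose fiber is a minimal set is Gδ. -/
theorem stmt4 {X Z : Type*} [MetricSpace X] [CompactSpace X]
    [MetricSpace Z] [CompactSpace Z] (T : X ≃ₜ X) (π : X → Z)
    (hcont : Continuous π) (hsurj : Function.Surjective π)
    (hfix : ∀ x, π (T x) = π x) :
    IsGδ {z : Z | IsMinimalSubset T (π ⁻¹' {z})} := by
  classical
  have hfiber_inv : ∀ z : Z, T '' (π ⁻¹' {z}) = π ⁻¹' {z} := by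
    intro z
    ext x
    constructor
    · rintro ⟨w, hw, rfl⟩
      simpa [hfix] using hw
    · intro hx
      have hx' : π x = z := hx
      refine ⟨T.symm x, ?_, T.apply_symm_apply x⟩
      have hz : π (T.symm x) = z := by rw [← hfix, T.apply_symm_apply]; exact hx'
      exact hz
  have hopen : ∀ ε : ℝ, 0 < ε →
      IsOpen {z : Z | ∃ F : Finset ℤ, ∀ x y : X, π x = z → π y = z →
        ∃ n ∈ F, dist (zIter T n x) y < ε} := by
    intro ε hε
    rw [isOpen_iff_mem_nhds]
    rintro z ⟨F, hF⟩
    have hKc : IsCompact (π ⁻¹' {z}) := (isClosed_singleton.preimage hcont).isCompact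
    set U : Set (X × X) := {p | ∃ n ∈ F, dist (zIter T n p.1) p.2 < ε} with hUdef
    have hUopen : IsOpen U := by
      have hU : U = ⋃ n ∈ F, {p : X × X | dist (zIter T n p.1) p.2 < ε} := by
        ext p; simp [hUdef]
      rw [hU]
      exact isOpen_biUnion fun n _ =>
        isOpen_lt (((zIter_continuous T n).comp continuous_fst).dist continuous_snd)
          continuous_const
    have hsub : (π ⁻¹' {z}) ×ˢ (π ⁻¹' {z}) ⊆ U := by
      rintro ⟨x, y⟩ ⟨hx, hy⟩
      exact hF x y hx hy
    have hmem : U ∈ 𝓝ˢ ((π ⁻¹' {z}) ×ˢ (π ⁻¹' {z})) := hUopen.mem_nhdsSet.mpr hsub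
    rw [hKc.nhdsSet_prod_eq hKc] at hmem
    obtain ⟨A, hA, B, hB, hAB⟩ := Filter.mem_prod_iff.mp hmem
    set V := interior A ∩ interior B with hV
    have hVopen : IsOpen V := isOpen_interior.inter isOpen_interior
    have hKV : π ⁻¹' {z} ⊆ V :=
      subset_inter (subset_interior_iff_mem_nhdsSet.mpr hA)
        (subset_interior_iff_mem_nhdsSet.mpr hB)
    have hWclosed : IsClosed (π '' Vᶜ) :=
      ((hVopen.isClosed_compl).isCompact.image hcont).isClosed
    have hzW : z ∈ (π '' Vᶜ)ᶜ := by
      rintro ⟨x, hx, rfl⟩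
      exact hx (hKV rfl)
    refine Filter.mem_of_superset (hWclosed.isOpen_compl.mem_nhds hzW) ?_
    intro z' hz'
    refine ⟨F, fun x y hx hy => ?_⟩
    have hxV : x ∈ V := by
      by_contra h
      exact hz' ⟨x, h, hx⟩
    have hyV : y ∈ V := by
      by_contra h
      exact hz' ⟨y, h, hy⟩
    exact hAB (Set.mk_mem_prod (interior_subset hxV.1) (interior_subset hyV.2))
  have key : {z : Z | IsMinimalSubset T (π ⁻¹' {z})} =
      ⋂ m : ℕ, {z : Z | ∃ F : Finset ℤ, ∀ x y : X, π x = z → π y = z →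
        ∃ n ∈ F, dist (zIter T n x) y < 1 / (m + 1)} := by
    ext z
    simp only [mem_iInter, mem_setOf_eq]
    constructor
    · rintro ⟨hne, hcl, hinv, hmin⟩ m
      have hεpos : (0:ℝ) < 1 / (m+1) := by positivity
      have horbit : ∀ x : X, π x = z → closure (zOrbit T x) = π ⁻¹' {z} := by
        intro x hx
        apply hmin
        · have hsub : zOrbit T x ⊆ π ⁻¹' {z} := by
            rintro w ⟨n, rfl⟩
            have hw : π (zIter T n x) = z := by rw [zIter_pi T π hfix n x]; exact hx
            simpa using hw
          exact closure_minimal hsub hcl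
        · exact ⟨x, subset_closure ⟨0, zIter_zero T x⟩⟩
        · exact isClosed_closure
        · have himg : T '' zOrbit T x = zOrbit T x := by
            ext y
            constructor
            · rintro ⟨w, ⟨n, rfl⟩, rfl⟩
              refine ⟨n+1, ?_⟩
              show zIter T (n+1) x = T (zIter T n x)
              exact zIter_add_one T n x
            · rintro ⟨n, rfl⟩
              exact ⟨zIter T (n-1) x, ⟨n-1, rfl⟩, by
                show T (zIter T (n-1) x) = zIter T n x
                rw [← zIter_add_one, sub_add_cancel]⟩
          rw [T.image_closure, himg]
      have hKc : IsCompact ((π ⁻¹' {z}) ×ˢ (π ⁻¹' {z})) :=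
        ((isClosed_singleton.preimage hcont).isCompact).prod
          (isClosed_singleton.preimage hcont).isCompact
      have hcover : (π ⁻¹' {z}) ×ˢ (π ⁻¹' {z}) ⊆
          ⋃ n : ℤ, {p : X × X | dist (zIter T n p.1) p.2 < 1 / (m+1)} := by
        rintro ⟨x, y⟩ ⟨hx, hy⟩
        have hy' : y ∈ closure (zOrbit T x) := by rw [horbit x hx]; exact hy
        obtain ⟨w, hw, hd⟩ := Metric.mem_closure_iff.mp hy' _ hεpos
        obtain ⟨n, rfl⟩ := hw
        exact mem_iUnion.mpr ⟨n, by simpa [dist_comm] using hd⟩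
      obtain ⟨F, hF⟩ := hKc.elim_finite_subcover _ (fun n : ℤ =>
        isOpen_lt (((zIter_continuous T n).comp continuous_fst).dist continuous_snd)
          continuous_const) hcover
      refine ⟨F, fun x y hx hy => ?_⟩
      have hmem := hF (Set.mk_mem_prod hx hy)
      simpa using hmem
    · intro h
      obtain ⟨x₀, hx₀⟩ := hsurj z
      refine ⟨⟨x₀, hx₀⟩, isClosed_singleton.preimage hcont, hfiber_inv z, ?_⟩
      intro M' hM'sub hM'ne hM'cl hM'inv
      obtain ⟨x, hxM⟩ := hM'ne
      apply Subset.antisymm hM'sub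
      intro y hy
      have hyc : y ∈ closure M' := by
        rw [Metric.mem_closure_iff]
        intro ε hε
        obtain ⟨m, hm⟩ := exists_nat_one_div_lt hε
        obtain ⟨F, hF⟩ := h m
        have hx : π x = z := hM'sub hxM
        obtain ⟨n, _, hd⟩ := hF x y hx hy
        refine ⟨zIter T n x, zIter_mem_of_invariant T hM'inv hxM n, ?_⟩
        calc dist y (zIter T n x) = dist (zIter T n x) y := dist_comm _ _
        _ < 1 / (m+1) := hd
        _ < ε := hm
      rwa [hM'cl.closure_eq] at hyc
  rw [key]
  exact .iInter fun m => (hopen _ (by positivity)).isGδ
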